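/- Let η > 0, s < 0, 0 < T ≤ 1, and let S(t) be the semigroup with Fourier symbol e^{(iβk|k| − η(k²−|k|))t}. Then there is a constant C(s) such that for all φ ∈ H^s(𝕋) and all t ∈ (0,T], t^{|s|/2} ‖S(t)φ‖_{L²(𝕋)} ≤ C(s) f_{s,η}(T) ‖φ‖_{H^s}, where f_{s,η}(t) = 1 + (t^{|s|/2} + η^{−|s|/2}) exp((η/8)(t + t^{1/2}√(t + 8|s|/η))). -/

import Mathlib

/-- The H^s(𝕋) norm, expressed through the Fourier coefficients. -/
noncomputable def hsNorm (s : ℝ) (f : ℤ → ℂ) : ℝ :=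
  Real.sqrt (2 * Real.pi * ∑' k : ℤ, (1 + (k:ℝ) ^ 2) ^ s * ‖f k‖ ^ 2)

/-- The L²(𝕋) norm, expressed through the Fourier coefficients. -/
noncomputable def l2Norm (f : ℤ → ℂ) : ℝ :=
  Real.sqrt (2 * Real.pi * ∑' k : ℤ, ‖f k‖ ^ 2)

/-- The Fourier symbol `e^{(iβk|k| − η(k²−|k|)) t}` of the Chen–Lee semigroup `S(t)`. -/
noncomputable def semigroupSymbol (β η t : ℝ) (k : ℤ) : ℂ :=
  Complex.exp ((Complex.I * (β * (k:ℝ) * |(k:ℝ)| : ℝ) -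
    ((η * ((k:ℝ) ^ 2 - |(k:ℝ)|) : ℝ) : ℂ)) * (t : ℝ))


lemma pow_le_factorial_mul_exp (w : ℝ) (hw : 0 ≤ w) (n : ℕ) :
    w ^ n ≤ n.factorial * Real.exp w := by
  have h := Real.sum_le_exp_of_nonneg hw (n+1)
  have h2 : w ^ n / (n.factorial : ℝ) ≤ Real.exp w := by
    refine le_trans ?_ h
    exact Finset.single_le_sum (f := fun i => w ^ i / (i.factorial : ℝ))
      (fun i _ => by positivity) (Finset.self_mem_range_succ n)
  have hn : (0:ℝ) < (n.factorial : ℝ) := by positivity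
  rw [div_le_iff₀ hn] at h2
  linarith [h2]

lemma rpow_le_const_mul_exp (a w : ℝ) (ha : 0 < a) (hw : 0 ≤ w) :
    w ^ a ≤ (1 + ((Nat.ceil a).factorial : ℝ)) * Real.exp w := by
  have hexp : (1:ℝ) ≤ Real.exp w := Real.one_le_exp hw
  have hfac : (0:ℝ) < ((Nat.ceil a).factorial : ℝ) := by positivity
  rcases le_or_gt w 1 with h1 | h1
  · have : w ^ a ≤ 1 := Real.rpow_le_one hw h1 ha.le
    nlinarith [Real.exp_pos w]
  · have hle : w ^ a ≤ w ^ (Nat.ceil a : ℝ) :=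
      Real.rpow_le_rpow_of_exponent_le h1.le (Nat.le_ceil a)
    rw [Real.rpow_natCast] at hle
    have := pow_le_factorial_mul_exp w hw (Nat.ceil a)
    nlinarith [Real.exp_pos w]

noncomputable def C1 (σ : ℝ) : ℝ := 4 ^ (σ/2) * (1 + ((Nat.ceil (σ/2)).factorial : ℝ))

lemma C1_pos (σ : ℝ) : 0 < C1 σ := by
  unfold C1; positivity

lemma one_le_C1 (σ : ℝ) (hσ : 0 < σ) : 1 ≤ C1 σ := by
  unfold C1
  have h4 : (1:ℝ) ≤ 4 ^ (σ/2) := Real.one_le_rpow (by norm_num) (by linarith)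
  have hf : (1:ℝ) ≤ ((Nat.ceil (σ/2)).factorial : ℝ) := by
    exact_mod_cast Nat.one_le_iff_ne_zero.mpr (Nat.factorial_ne_zero _)
  nlinarith

lemma gauss_bound (σ η u : ℝ) (hσ : 0 < σ) (hη : 0 < η) (hu : 0 ≤ u) :
    u ^ σ * Real.exp (-(η * u^2/4)) ≤ C1 σ * η ^ (-(σ/2)) := by
  have hw : 0 ≤ η * u^2/4 := by positivity
  have key : u ^ σ = (4/η) ^ (σ/2) * (η * u^2/4) ^ (σ/2) := by
    rw [← Real.mul_rpow (by positivity) hw]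
    have h : 4/η * (η * u^2/4) = u^2 := by field_simp
    rw [h, ← Real.rpow_natCast u 2, ← Real.rpow_mul hu]
    push_cast
    rw [show (2:ℝ)*(σ/2) = σ by ring]
  rw [key]
  have h1 := rpow_le_const_mul_exp (σ/2) (η * u^2/4) (by positivity) hw
  have h2 : (0:ℝ) < (4/η) ^ (σ/2) := by positivity
  have h3 : (4/η) ^ (σ/2) = 4 ^ (σ/2) * η ^ (-(σ/2)) := by
    rw [Real.div_rpow (by norm_num) hη.le, Real.rpow_neg hη.le, div_eq_mul_inv]
  calc (4/η) ^ (σ/2) * (η * u^2/4) ^ (σ/2) * Real.exp (-(η * u^2/4))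
      ≤ (4/η) ^ (σ/2) * ((1 + ((Nat.ceil (σ/2)).factorial : ℝ)) * Real.exp (η * u^2/4)) * Real.exp (-(η * u^2/4)) := by
        exact mul_le_mul_of_nonneg_right (mul_le_mul_of_nonneg_left h1 h2.le)
          (Real.exp_pos _).le
    _ = (4/η) ^ (σ/2) * (1 + ((Nat.ceil (σ/2)).factorial : ℝ)) := by
        rw [mul_assoc, mul_assoc, ← Real.exp_add]
        simp
    _ = C1 σ * η ^ (-(σ/2)) := by rw [h3]; unfold C1; ring

lemma key_bound (σ η t u : ℝ) (hσ : 0 < σ) (hη : 0 < η) (ht : 0 ≤ t) (hu : 0 ≤ u) :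
    u ^ σ * Real.exp (η * Real.sqrt t * u - η * u^2) ≤
      C1 σ * (t ^ (σ/2) + η ^ (-(σ/2))) * Real.exp (η * t / 4) := by
  set r := Real.sqrt t with hr
  have hr0 : 0 ≤ r := Real.sqrt_nonneg t
  have hr2 : r ^ 2 = t := Real.sq_sqrt ht
  have hsq : η * r * u - η * u^2 = η * t / 4 - η * (u - r/2)^2 := by
    rw [← hr2]; ring
  rw [hsq, Real.exp_sub]
  have hC1 := one_le_C1 σ hσ
  have htpow : (0:ℝ) ≤ t ^ (σ/2) := Real.rpow_nonneg ht _
  have hetapow : (0:ℝ) < η ^ (-(σ/2)) := Real.rpow_pos_of_pos hη _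
  have hexp4 : (0:ℝ) < Real.exp (η * t / 4) := Real.exp_pos _
  rcases le_total u r with hcase | hcase
  · -- u ≤ √t
    have h1 : u ^ σ ≤ t ^ (σ/2) := by
      have : u ^ σ ≤ r ^ σ := Real.rpow_le_rpow hu hcase hσ.le
      refine this.trans (le_of_eq ?_)
      rw [hr, Real.sqrt_eq_rpow, ← Real.rpow_mul ht]
      ring_nf
    have h2 : Real.exp (η * t / 4) / Real.exp (η * (u - r/2)^2) ≤ Real.exp (η * t / 4) := by
      rw [div_le_iff₀ (Real.exp_pos _)]
      nlinarith [Real.one_le_exp (show (0:ℝ) ≤ η * (u - r/2)^2 by positivity), hexp4]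
    calc u ^ σ * (Real.exp (η * t / 4) / Real.exp (η * (u - r/2)^2))
        ≤ t ^ (σ/2) * Real.exp (η * t / 4) := by
          apply mul_le_mul h1 h2 (by positivity) htpow
      _ ≤ C1 σ * (t ^ (σ/2) + η ^ (-(σ/2))) * Real.exp (η * t / 4) := by
          have hf : t ^ (σ/2) ≤ C1 σ * (t ^ (σ/2) + η ^ (-(σ/2))) := by nlinarith
          exact mul_le_mul_of_nonneg_right hf hexp4.le
  · -- √t ≤ u
    have hstep : η * u^2/4 ≤ η * (u - r/2)^2 := by
      nlinarith [mul_nonneg hη.le (mul_nonneg (sub_nonneg.mpr hcase)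
        (show (0:ℝ) ≤ 3*u - r by linarith))]
    have h2 : Real.exp (η * t / 4) / Real.exp (η * (u - r/2)^2) ≤
        Real.exp (η * t / 4) * Real.exp (-(η * u^2/4)) := by
      rw [div_le_iff₀ (Real.exp_pos _), mul_assoc, ← Real.exp_add, ← Real.exp_add]
      exact Real.exp_le_exp.mpr (by linarith)
    have h3 := gauss_bound σ η u hσ hη hu
    calc u ^ σ * (Real.exp (η * t / 4) / Real.exp (η * (u - r/2)^2))
        ≤ u ^ σ * (Real.exp (η * t / 4) * Real.exp (-(η * u^2/4))) := by
          apply mul_le_mul_of_nonneg_left h2 (Real.rpow_nonneg hu _)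
      _ = (u ^ σ * Real.exp (-(η * u^2/4))) * Real.exp (η * t / 4) := by ring
      _ ≤ (C1 σ * η ^ (-(σ/2))) * Real.exp (η * t / 4) := by
          apply mul_le_mul_of_nonneg_right h3 hexp4.le
      _ ≤ C1 σ * (t ^ (σ/2) + η ^ (-(σ/2))) * Real.exp (η * t / 4) := by
          have hf : C1 σ * η ^ (-(σ/2)) ≤ C1 σ * (t ^ (σ/2) + η ^ (-(σ/2))) := by
            nlinarith [C1_pos σ]
          exact mul_le_mul_of_nonneg_right hf hexp4.le

lemma symbol_norm (β η t : ℝ) (k : ℤ) :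
    ‖semigroupSymbol β η t k‖ = Real.exp (η * (|(k:ℝ)| - (k:ℝ)^2) * t) := by
  rw [semigroupSymbol, Complex.norm_exp]
  congr 1
  simp [Complex.mul_re, Complex.sub_re, Complex.mul_im, Complex.ofReal_re, Complex.ofReal_im,
    ← Complex.ofReal_pow]
  ring

lemma add_one_rpow_le (y a : ℝ) (hy : 0 ≤ y) (ha : 0 ≤ a) :
    (1 + y) ^ a ≤ 2 ^ a * (1 + y ^ a) := by
  have h2 : (0:ℝ) < 2 ^ a := by positivity
  have hya : 0 ≤ y ^ a := Real.rpow_nonneg hy a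
  rcases le_total y 1 with h1 | h1
  · have : (1+y) ^ a ≤ 2 ^ a := Real.rpow_le_rpow (by linarith) (by linarith) ha
    nlinarith
  · have h12 : (1+y) ^ a ≤ (2*y) ^ a := Real.rpow_le_rpow (by linarith) (by linarith) ha
    rw [Real.mul_rpow (by norm_num) hy] at h12
    nlinarith

set_option maxHeartbeats 1000000 in
lemma pointwise_bound (s β η T t : ℝ) (hs : s < 0) (hη : 0 < η) (hT0 : 0 < T)
    (hT1 : T ≤ 1) (ht : 0 < t) (htT : t ≤ T) (k : ℤ) :
    t ^ (|s|/2) * ‖semigroupSymbol β η t k‖ ≤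
      (2 ^ (|s|/2) * (1 + C1 |s|)) *
        (1 + (T ^ (|s|/2) + η ^ (-(|s|/2))) *
          Real.exp (η / 8 * (T + Real.sqrt T * Real.sqrt (T + 8 * |s| / η)))) *
        (1 + (k:ℝ)^2) ^ (s/2) := by
  set σ := |s| with hσdef
  have hσ : 0 < σ := abs_pos.mpr hs.ne
  have hσs : σ = -s := abs_of_neg hs
  set K := (k:ℝ) with hK
  set x := |K| with hxdef
  have hx0 : 0 ≤ x := abs_nonneg K
  have hx2 : x ^ 2 = K ^ 2 := sq_abs K
  have hxx : x ≤ x ^ 2 := by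
    rcases eq_or_ne k 0 with h | h
    · simp [hxdef, hK, h]
    · have : (1:ℝ) ≤ x := by
        rw [hxdef, hK]
        exact_mod_cast Int.one_le_abs (by exact_mod_cast h) |>.trans_eq (by push_cast; simp)
      nlinarith
  set G := (T ^ (σ/2) + η ^ (-(σ/2))) *
      Real.exp (η / 8 * (T + Real.sqrt T * Real.sqrt (T + 8 * σ / η))) with hGdef
  have hG : 0 ≤ G := by
    apply mul_nonneg _ (Real.exp_pos _).le
    have := Real.rpow_nonneg hT0.le (σ/2)
    have := (Real.rpow_pos_of_pos hη (-(σ/2))).le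
    linarith
  have hKpos : (0:ℝ) < 1 + K ^ 2 := by positivity
  -- main product bound
  have main : t ^ (σ/2) * (1 + K^2) ^ (σ/2) * ‖semigroupSymbol β η t k‖ ≤
      (2 ^ (σ/2) * (1 + C1 σ)) * (1 + G) := by
    rw [symbol_norm]
    have hE : η * (|(k:ℝ)| - (k:ℝ)^2) * t = η * (x - x^2) * t := by rw [hxdef, hK, hx2]
    rw [hE]
    have hEneg : η * (x - x^2) * t ≤ 0 := by
      have := mul_nonneg (mul_nonneg hη.le (sub_nonneg.mpr hxx)) ht.le
      nlinarith
    have hexpE1 : Real.exp (η * (x - x^2) * t) ≤ 1 := Real.exp_le_one_iff.mpr hEneg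
    have hexpE0 : 0 ≤ Real.exp (η * (x - x^2) * t) := (Real.exp_pos _).le
    -- A1 + A2
    have hA12 : t ^ (σ/2) * (1 + K^2) ^ (σ/2) ≤ (1 + t * K^2) ^ (σ/2) := by
      rw [← Real.mul_rpow ht.le hKpos.le]
      apply Real.rpow_le_rpow (by positivity) _ (by positivity)
      nlinarith [sq_nonneg K]
    have hA3 : (1 + t * K^2) ^ (σ/2) ≤ 2 ^ (σ/2) * (1 + (t * K^2) ^ (σ/2)) :=
      add_one_rpow_le _ _ (by positivity) (by positivity)
    -- the u-substitution
    set u := Real.sqrt t * x with hudef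
    have hu0 : 0 ≤ u := by positivity
    have hu2 : u ^ 2 = t * x ^ 2 := by
      rw [hudef, mul_pow, Real.sq_sqrt ht.le]
    have huσ : (t * K^2) ^ (σ/2) = u ^ σ := by
      rw [← hx2, ← hu2, ← Real.rpow_natCast u 2, ← Real.rpow_mul hu0]
      push_cast
      rw [show (2:ℝ) * (σ/2) = σ by ring]
    have hsqt : Real.sqrt t ^ 2 = t := Real.sq_sqrt ht.le
    have hEu : η * (x - x^2) * t = η * Real.sqrt t * u - η * u^2 := by
      rw [hudef]
      linear_combination (η * x ^ 2 - η * x) * hsqt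
    have hkey := key_bound σ η t u hσ hη ht.le hu0
    rw [← hEu, ← huσ] at hkey
    -- exp(ηt/4) ≤ exp of the big thing
    have hsqT : Real.sqrt T * Real.sqrt T = T := Real.mul_self_sqrt hT0.le
    have hsqle : Real.sqrt T ≤ Real.sqrt (T + 8 * σ / η) :=
      Real.sqrt_le_sqrt (by nlinarith [div_nonneg (by positivity : (0:ℝ) ≤ 8*σ) hη.le])
    have hexp_mono : Real.exp (η * t / 4) ≤
        Real.exp (η / 8 * (T + Real.sqrt T * Real.sqrt (T + 8 * σ / η))) := by
      apply Real.exp_le_exp.mpr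
      have h1 : η * t / 4 ≤ η * T / 4 := by
        have := mul_le_mul_of_nonneg_left htT hη.le
        linarith
      have h2 : T ≤ Real.sqrt T * Real.sqrt (T + 8 * σ / η) := by
        calc T = Real.sqrt T * Real.sqrt T := hsqT.symm
          _ ≤ Real.sqrt T * Real.sqrt (T + 8 * σ / η) :=
            mul_le_mul_of_nonneg_left hsqle (Real.sqrt_nonneg T)
      have h3 := mul_nonneg hη.le (sub_nonneg.mpr h2)
      nlinarith [h3]
    have htT' : t ^ (σ/2) ≤ T ^ (σ/2) := Real.rpow_le_rpow ht.le htT (by positivity)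
    have hsecond : (t * K^2) ^ (σ/2) * Real.exp (η * (x - x^2) * t) ≤ C1 σ * G := by
      calc (t * K^2) ^ (σ/2) * Real.exp (η * (x - x^2) * t)
          ≤ C1 σ * (t ^ (σ/2) + η ^ (-(σ/2))) * Real.exp (η * t / 4) := hkey
        _ ≤ C1 σ * (T ^ (σ/2) + η ^ (-(σ/2))) *
            Real.exp (η / 8 * (T + Real.sqrt T * Real.sqrt (T + 8 * σ / η))) := by
            have hfac : C1 σ * (t ^ (σ/2) + η ^ (-(σ/2))) ≤
                C1 σ * (T ^ (σ/2) + η ^ (-(σ/2))) :=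
              mul_le_mul_of_nonneg_left (by linarith) (C1_pos σ).le
            have hTpow : (0:ℝ) ≤ T ^ (σ/2) := Real.rpow_nonneg hT0.le _
            have hepow : (0:ℝ) ≤ η ^ (-(σ/2)) := (Real.rpow_pos_of_pos hη _).le
            exact mul_le_mul hfac hexp_mono (Real.exp_pos _).le
              (mul_nonneg (C1_pos σ).le (by linarith))
        _ = C1 σ * G := by rw [hGdef]; ring
    have hfirst : Real.exp (η * (x - x^2) * t) ≤ 1 + G := by linarith
    calc t ^ (σ/2) * (1 + K^2) ^ (σ/2) * Real.exp (η * (x - x^2) * t)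
        ≤ (2 ^ (σ/2) * (1 + (t * K^2) ^ (σ/2))) * Real.exp (η * (x - x^2) * t) := by
          apply mul_le_mul_of_nonneg_right (hA12.trans hA3) hexpE0
      _ = 2 ^ (σ/2) * (Real.exp (η * (x - x^2) * t) +
            (t * K^2) ^ (σ/2) * Real.exp (η * (x - x^2) * t)) := by ring
      _ ≤ 2 ^ (σ/2) * ((1 + G) + C1 σ * (1 + G)) := by
          have hC1G : C1 σ * G ≤ C1 σ * (1 + G) := by nlinarith [C1_pos σ]
          have : (0:ℝ) < 2 ^ (σ/2) := by positivity
          nlinarith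
      _ = (2 ^ (σ/2) * (1 + C1 σ)) * (1 + G) := by ring
  -- transfer
  have hcancel : (1 + K^2) ^ (σ/2) * (1 + K^2) ^ (s/2) = 1 := by
    rw [← Real.rpow_add hKpos, hσs]
    rw [show -s / 2 + s / 2 = (0:ℝ) by ring, Real.rpow_zero]
  have hfin : t ^ (σ/2) * (1 + K^2) ^ (σ/2) * ‖semigroupSymbol β η t k‖ * (1 + K^2) ^ (s/2)
      = t ^ (σ/2) * ‖semigroupSymbol β η t k‖ := by
    calc t ^ (σ/2) * (1 + K^2) ^ (σ/2) * ‖semigroupSymbol β η t k‖ * (1 + K^2) ^ (s/2)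
        = (t ^ (σ/2) * ‖semigroupSymbol β η t k‖) * ((1 + K^2) ^ (σ/2) * (1 + K^2) ^ (s/2)) := by
          ring
      _ = t ^ (σ/2) * ‖semigroupSymbol β η t k‖ := by rw [hcancel, mul_one]
  rw [← hfin]
  exact mul_le_mul_of_nonneg_right main (Real.rpow_nonneg hKpos.le _)

/-- For s < 0 there is C = C(s) > 0 such that for all η > 0, 0 < T ≤ 1,
every φ ∈ H^s(𝕋) and all t ∈ (0,T],
`t^{|s|/2} ‖S(t)φ‖_{L²} ≤ C f_{s,η}(T) ‖φ‖_{H^s}`, where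
`f_{s,η}(T) = 1 + (T^{|s|/2} + η^{−|s|/2}) e^{(η/8)(T + √T √(T+8|s|/η))}`. -/
theorem stmt8 (s : ℝ) (hs : s < 0) :
    ∃ C > (0:ℝ), ∀ (β η T : ℝ), 0 < η → 0 < T → T ≤ 1 →
      ∀ φ : ℤ → ℂ, (Summable fun k : ℤ => (1 + (k:ℝ) ^ 2) ^ s * ‖φ k‖ ^ 2) →
        ∀ t ∈ Set.Ioc (0:ℝ) T,
          t ^ (|s| / 2) * l2Norm (fun k => semigroupSymbol β η t k * φ k) ≤
            C * (1 + (T ^ (|s| / 2) + η ^ (-(|s| / 2))) *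
                Real.exp (η / 8 * (T + Real.sqrt T * Real.sqrt (T + 8 * |s| / η)))) *
              hsNorm s φ := by

  classical
  set σ := |s| with hσdef
  have hσ : 0 < σ := abs_pos.mpr hs.ne
  refine ⟨2 ^ (σ/2) * (1 + C1 σ),
    mul_pos (Real.rpow_pos_of_pos (by norm_num) _) (by linarith [C1_pos σ]), ?_⟩
  intro β η T hη hT0 hT1 φ hφ t ht
  obtain ⟨ht0, htT⟩ := ht
  set M := 2 ^ (σ/2) * (1 + C1 σ) *
      (1 + (T ^ (σ/2) + η ^ (-(σ/2))) *
        Real.exp (η / 8 * (T + Real.sqrt T * Real.sqrt (T + 8 * σ / η)))) with hMdef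
  have hGpos : (0:ℝ) ≤ (T ^ (σ/2) + η ^ (-(σ/2))) *
      Real.exp (η / 8 * (T + Real.sqrt T * Real.sqrt (T + 8 * σ / η))) := by
    have h1 : (0:ℝ) ≤ T ^ (σ/2) := Real.rpow_nonneg hT0.le _
    have h2 : (0:ℝ) ≤ η ^ (-(σ/2)) := (Real.rpow_pos_of_pos hη _).le
    exact mul_nonneg (by linarith) (Real.exp_pos _).le
  have hM : (0:ℝ) ≤ M := by
    rw [hMdef]
    have h2 : (0:ℝ) < 2 ^ (σ/2) := Real.rpow_pos_of_pos (by norm_num) _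
    exact mul_nonneg (mul_nonneg h2.le (by linarith [C1_pos σ])) (by linarith)
  -- pointwise squared bound
  have hpt : ∀ k : ℤ, t ^ σ * ‖semigroupSymbol β η t k * φ k‖ ^ 2 ≤
      M ^ 2 * ((1 + (k:ℝ) ^ 2) ^ s * ‖φ k‖ ^ 2) := by
    intro k
    have hb := pointwise_bound s β η T t hs hη hT0 hT1 ht0 htT k
    rw [← hσdef] at hb
    have hl : (0:ℝ) ≤ t ^ (σ/2) * ‖semigroupSymbol β η t k‖ :=
      mul_nonneg (Real.rpow_nonneg ht0.le _) (norm_nonneg _)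
    have hsq := mul_self_le_mul_self hl hb
    have e1 : t ^ (σ/2) * t ^ (σ/2) = t ^ σ := by
      rw [← Real.rpow_add ht0]; ring_nf
    have hKpos : (0:ℝ) < 1 + (k:ℝ) ^ 2 := by positivity
    have e2 : (1 + (k:ℝ) ^ 2) ^ (s/2) * (1 + (k:ℝ) ^ 2) ^ (s/2) = (1 + (k:ℝ) ^ 2) ^ s := by
      rw [← Real.rpow_add hKpos]; ring_nf
    have hstep : t ^ σ * ‖semigroupSymbol β η t k‖ ^ 2 ≤ M ^ 2 * (1 + (k:ℝ) ^ 2) ^ s := by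
      calc t ^ σ * ‖semigroupSymbol β η t k‖ ^ 2
          = (t ^ (σ/2) * ‖semigroupSymbol β η t k‖) *
            (t ^ (σ/2) * ‖semigroupSymbol β η t k‖) := by rw [← e1]; ring
        _ ≤ (M * (1 + (k:ℝ) ^ 2) ^ (s/2)) * (M * (1 + (k:ℝ) ^ 2) ^ (s/2)) := hsq
        _ = M ^ 2 * (1 + (k:ℝ) ^ 2) ^ s := by rw [← e2]; ring
    calc t ^ σ * ‖semigroupSymbol β η t k * φ k‖ ^ 2
        = t ^ σ * ‖semigroupSymbol β η t k‖ ^ 2 * ‖φ k‖ ^ 2 := by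
          rw [norm_mul]; ring
      _ ≤ M ^ 2 * (1 + (k:ℝ) ^ 2) ^ s * ‖φ k‖ ^ 2 := by
          exact mul_le_mul_of_nonneg_right hstep (by positivity)
      _ = M ^ 2 * ((1 + (k:ℝ) ^ 2) ^ s * ‖φ k‖ ^ 2) := by ring
  -- summability
  have hsumg : Summable fun k : ℤ => M ^ 2 * ((1 + (k:ℝ) ^ 2) ^ s * ‖φ k‖ ^ 2) :=
    hφ.mul_left _
  have hsumh : Summable fun k : ℤ => t ^ σ * ‖semigroupSymbol β η t k * φ k‖ ^ 2 :=
    Summable.of_nonneg_of_le (fun k => by positivity) hpt hsumg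
  have hsum_le : (∑' k : ℤ, t ^ σ * ‖semigroupSymbol β η t k * φ k‖ ^ 2) ≤
      M ^ 2 * ∑' k : ℤ, (1 + (k:ℝ) ^ 2) ^ s * ‖φ k‖ ^ 2 := by
    rw [← tsum_mul_left]
    exact Summable.tsum_le_tsum hpt hsumh hsumg
  have htsum_nonneg : (0:ℝ) ≤ ∑' k : ℤ, (1 + (k:ℝ) ^ 2) ^ s * ‖φ k‖ ^ 2 :=
    tsum_nonneg fun k => by positivity
  -- put it together
  rw [l2Norm, hsNorm]
  have hLHS : t ^ (σ/2) * Real.sqrt (2 * Real.pi *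
      ∑' k : ℤ, ‖semigroupSymbol β η t k * φ k‖ ^ 2) =
      Real.sqrt (2 * Real.pi * ∑' k : ℤ, t ^ σ * ‖semigroupSymbol β η t k * φ k‖ ^ 2) := by
    rw [tsum_mul_left]
    have h1 : t ^ (σ/2) = Real.sqrt (t ^ σ) := by
      rw [Real.sqrt_eq_rpow, ← Real.rpow_mul ht0.le]; ring_nf
    rw [h1, ← Real.sqrt_mul (Real.rpow_nonneg ht0.le _)]
    congr 1; ring
  rw [hLHS]
  have hRHS : Real.sqrt (M ^ 2 * (2 * Real.pi * ∑' k : ℤ, (1 + (k:ℝ) ^ 2) ^ s * ‖φ k‖ ^ 2)) =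
      M * Real.sqrt (2 * Real.pi * ∑' k : ℤ, (1 + (k:ℝ) ^ 2) ^ s * ‖φ k‖ ^ 2) := by
    rw [Real.sqrt_mul (by positivity : (0:ℝ) ≤ M ^ 2), Real.sqrt_sq hM]
  calc Real.sqrt (2 * Real.pi * ∑' k : ℤ, t ^ σ * ‖semigroupSymbol β η t k * φ k‖ ^ 2)
      ≤ Real.sqrt (M ^ 2 * (2 * Real.pi * ∑' k : ℤ, (1 + (k:ℝ) ^ 2) ^ s * ‖φ k‖ ^ 2)) := by
        apply Real.sqrt_le_sqrt
        nlinarith [Real.pi_pos, hsum_le]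
    _ = M * Real.sqrt (2 * Real.pi * ∑' k : ℤ, (1 + (k:ℝ) ^ 2) ^ s * ‖φ k‖ ^ 2) := hRHS
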